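/- For every initial value x₀ in the open positive orthant (0,∞)⁷ there exists a unique solution x of the COVID-19 system defined on all of [0,∞) with x(0) = x₀; moreover this solution satisfies x(t) ∈ (0,∞)⁷ for all t ≥ 0 and is bounded, namely N(t) ≤ Λ/μ + N(0) for all t ≥ 0. -/

import Mathlib

open scoped BigOperators

/-- The vector field of the deterministic SQEAIHR COVID-19 model.
State: `x = (S, Q, E, A, I, H, R)` indexed by `Fin 7`. -/
noncomputable def covidF (Λ b q lam μ σ εA γA dA εI γI dI γH dH θ p β₁ β₂ : ℝ)
    (x : Fin 7 → ℝ) : Fin 7 → ℝ :=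
  ![Λ - (β₁ - β₂ * x 4 / (b + x 4)) * x 0 * (x 4 + θ * x 3) + lam * x 1 - (μ + q) * x 0,
    q * x 0 - (μ + lam) * x 1,
    (β₁ - β₂ * x 4 / (b + x 4)) * x 0 * (x 4 + θ * x 3) - (μ + σ) * x 2,
    (1 - p) * σ * x 2 - (μ + εA + γA + dA) * x 3,
    σ * p * x 2 - (μ + εI + γI + dI) * x 4,
    εI * x 4 + εA * x 3 - (μ + dH + γH) * x 5,
    γH * x 5 + γI * x 4 + γA * x 3 - μ * x 6]

/-- A solution of the system on `[0, ∞)`: a function differentiable (within `[0,∞)`) whose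
derivative equals the vector field at every `t ≥ 0`. -/
def IsSolution (F : (Fin 7 → ℝ) → Fin 7 → ℝ) (x : ℝ → Fin 7 → ℝ) : Prop :=
  ∀ t : ℝ, 0 ≤ t → HasDerivWithinAt x (F (x t)) (Set.Ici (0 : ℝ)) t


section CovidAux

open Set Filter Topology

variable {E : Type*} [NormedAddCommGroup E] [NormedSpace ℝ E] [CompleteSpace E]

theorem exists_local_solution {K : NNReal} {G : E → E} (hK : LipschitzWith K G)
    {C : ℝ} (hC : ∀ x, ‖G x‖ ≤ C) (t₀ : ℝ) (z : E) :
    ∃ f : ℝ → E, f t₀ = z ∧ ∀ t ∈ Icc t₀ (t₀ + 1),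
      HasDerivWithinAt f (G (f t)) (Icc t₀ (t₀ + 1)) t := by
  set L : NNReal := ⟨max C 0, le_max_right _ _⟩ with hL
  have hpl : IsPicardLindelof (fun _ : ℝ => G) (tmin := t₀) (tmax := t₀ + 1)
      ⟨t₀, le_refl _, by linarith⟩ z L 0 L K := by
    apply IsPicardLindelof.of_time_independent
    · intro x _; exact (hC x).trans (le_max_left _ _)
    · exact hK.lipschitzOnWith
    · have : max (t₀ + 1 - t₀) (t₀ - t₀) = 1 := by
        rw [add_sub_cancel_left, sub_self]; exact max_eq_left zero_le_one
      simp only [this, mul_one, NNReal.coe_zero, sub_zero, le_refl]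
  obtain ⟨f, hf0, hf⟩ := hpl.exists_eq_forall_mem_Icc_hasDerivWithinAt₀
  exact ⟨f, hf0, hf⟩

theorem exists_global_solution {K : NNReal} {G : E → E} (hK : LipschitzWith K G)
    {C : ℝ} (hC : ∀ x, ‖G x‖ ≤ C) (x₀ : E) :
    ∃ f : ℝ → E, f 0 = x₀ ∧ ∀ t : ℝ, 0 ≤ t → HasDerivWithinAt f (G (f t)) (Ici 0) t := by
  choose sol hsol0 hsol using exists_local_solution hK hC
  set seq : ℕ → (ℝ → E) := fun n =>
    Nat.rec (sol 0 x₀) (fun m fm => sol ((m : ℝ) + 1) (fm ((m : ℝ) + 1))) n with hseq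
  have seq_deriv : ∀ n : ℕ, ∀ t ∈ Icc (n : ℝ) ((n : ℝ) + 1),
      HasDerivWithinAt (seq n) (G (seq n t)) (Icc (n : ℝ) ((n : ℝ) + 1)) t := by
    intro n
    cases n with
    | zero => exact_mod_cast hsol 0 x₀
    | succ m =>
      have := hsol ((m : ℝ) + 1) (seq m ((m : ℝ) + 1))
      intro t ht
      have hc : ((m + 1 : ℕ) : ℝ) = (m : ℝ) + 1 := by push_cast; ring
      rw [hc] at ht ⊢
      exact this t ht
  have seq_match : ∀ n : ℕ, seq (n + 1) ((n : ℝ) + 1) = seq n ((n : ℝ) + 1) := by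
    intro n
    exact hsol0 ((n : ℝ) + 1) (seq n ((n : ℝ) + 1))
  set f : ℝ → E := fun t => seq ⌊t⌋₊ t with hf
  have f_eq : ∀ n : ℕ, ∀ t ∈ Icc (n : ℝ) ((n : ℝ) + 1), f t = seq n t := by
    intro n t ht
    rcases lt_or_eq_of_le ht.2 with h | h
    · have : ⌊t⌋₊ = n := by
        rw [Nat.floor_eq_iff ((Nat.cast_nonneg n).trans ht.1)]
        exact ⟨ht.1, h⟩
      simp only [hf, this]
    · have hc : t = ((n + 1 : ℕ) : ℝ) := by push_cast; linarith
      have : ⌊t⌋₊ = n + 1 := by rw [hc, Nat.floor_natCast]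
      simp only [hf, this]
      rw [h]
      exact seq_match n
  have f_deriv_Icc : ∀ n : ℕ, ∀ t ∈ Icc (n : ℝ) ((n : ℝ) + 1),
      HasDerivWithinAt f (G (f t)) (Icc (n : ℝ) ((n : ℝ) + 1)) t := by
    intro n t ht
    have h1 := seq_deriv n t ht
    rw [← f_eq n t ht] at h1
    exact h1.congr (fun y hy => f_eq n y hy) (f_eq n t ht)
  refine ⟨f, ?_, ?_⟩
  · have h0 : (0 : ℝ) ∈ Icc ((0 : ℕ) : ℝ) (((0 : ℕ) : ℝ) + 1) := by norm_num
    have := f_eq 0 0 h0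
    simpa [hseq] using this.trans (show seq 0 0 = x₀ from hsol0 0 x₀)
  · intro t ht
    obtain ⟨n, hlo, hhi⟩ : ∃ n : ℕ, (n : ℝ) ≤ t ∧ t < (n : ℝ) + 1 :=
      ⟨⌊t⌋₊, Nat.floor_le ht, Nat.lt_floor_add_one t⟩
    rcases lt_or_eq_of_le hlo with h | h
    · have hmem : Icc (n : ℝ) ((n : ℝ) + 1) ∈ 𝓝 t := Icc_mem_nhds h hhi
      exact ((f_deriv_Icc n t ⟨hlo, hhi.le⟩).hasDerivAt hmem).hasDerivWithinAt
    · subst h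
      cases n with
      | zero =>
        have hd := f_deriv_Icc 0 ((0:ℕ):ℝ) ⟨le_refl _, by norm_num⟩
        have hmem : Icc ((0:ℕ):ℝ) (((0:ℕ):ℝ) + 1) ∈ 𝓝[Ici ((0:ℕ):ℝ)] ((0:ℕ):ℝ) :=
          Icc_mem_nhdsGE (by norm_num)
        have := hd.mono_of_mem_nhdsWithin hmem
        simpa using this
      | succ m =>
        have hc : ((m + 1 : ℕ) : ℝ) = (m : ℝ) + 1 := by push_cast; ring
        have hd1 := f_deriv_Icc m ((m+1:ℕ):ℝ) ⟨by rw [hc]; linarith, by rw [hc]⟩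
        have hd2 := f_deriv_Icc (m + 1) ((m+1:ℕ):ℝ) ⟨le_refl _, by linarith⟩
        rw [hc] at hd1 hd2 ⊢
        have hun := hd1.union hd2
        rw [Icc_union_Icc_eq_Icc (by linarith : (m:ℝ) ≤ (m:ℝ)+1)
          (by linarith : (m:ℝ)+1 ≤ (m:ℝ)+1+1)] at hun
        have hmem : Icc ((m : ℝ)) ((m : ℝ) + 1 + 1) ∈ 𝓝 ((m:ℝ)+1) :=
          Icc_mem_nhds (by linarith) (by linarith)
        exact (hun.hasDerivAt hmem).hasDerivWithinAt

-- component values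
theorem covidF_apply0 (Λ b q lam μ σ εA γA dA εI γI dI γH dH θ p β₁ β₂ : ℝ) (x : Fin 7 → ℝ) :
    covidF Λ b q lam μ σ εA γA dA εI γI dI γH dH θ p β₁ β₂ x 0 =
      Λ - (β₁ - β₂ * x 4 / (b + x 4)) * x 0 * (x 4 + θ * x 3) + lam * x 1 - (μ + q) * x 0 := rfl
theorem covidF_apply4 (Λ b q lam μ σ εA γA dA εI γI dI γH dH θ p β₁ β₂ : ℝ) (x : Fin 7 → ℝ) :
    covidF Λ b q lam μ σ εA γA dA εI γI dI γH dH θ p β₁ β₂ x 4 =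
      σ * p * x 2 - (μ + εI + γI + dI) * x 4 := rfl

theorem covid_contDiffOn (Λ b q lam μ σ εA γA dA εI γI dI γH dH θ p β₁ β₂ : ℝ) :
    ContDiffOn ℝ 1 (covidF Λ b q lam μ σ εA γA dA εI γI dI γH dH θ p β₁ β₂)
      {x : Fin 7 → ℝ | 0 < b + x 4} := by
  have hp : ∀ i : Fin 7, ContDiff ℝ 1 (fun x : Fin 7 → ℝ => x i) :=
    fun i => contDiff_pi.mp contDiff_id i
  set U := {x : Fin 7 → ℝ | 0 < b + x 4} with hU
  have hden : ContDiffOn ℝ 1 (fun x : Fin 7 → ℝ => β₂ * x 4 / (b + x 4)) U :=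
    ContDiffOn.div (contDiff_const.mul (hp 4)).contDiffOn
      (contDiff_const.add (hp 4)).contDiffOn (fun x hx => ne_of_gt hx)
  have hB : ContDiffOn ℝ 1
      (fun x : Fin 7 → ℝ => (β₁ - β₂ * x 4 / (b + x 4)) * x 0 * (x 4 + θ * x 3)) U :=
    ((contDiffOn_const.sub hden).mul (hp 0).contDiffOn).mul
      ((hp 4).contDiffOn.add (contDiffOn_const.mul (hp 3).contDiffOn))
  rw [contDiffOn_pi]
  intro i
  fin_cases i
  · exact ((contDiffOn_const.sub hB).add
      (contDiffOn_const.mul (hp 1).contDiffOn)).sub (contDiffOn_const.mul (hp 0).contDiffOn)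
  · exact (contDiffOn_const.mul (hp 0).contDiffOn).sub (contDiffOn_const.mul (hp 1).contDiffOn)
  · exact hB.sub (contDiffOn_const.mul (hp 2).contDiffOn)
  · exact (contDiffOn_const.mul (hp 2).contDiffOn).sub (contDiffOn_const.mul (hp 3).contDiffOn)
  · exact (contDiffOn_const.mul (hp 2).contDiffOn).sub (contDiffOn_const.mul (hp 4).contDiffOn)
  · exact ((contDiffOn_const.mul (hp 4).contDiffOn).add
      (contDiffOn_const.mul (hp 3).contDiffOn)).sub (contDiffOn_const.mul (hp 5).contDiffOn)
  · exact (((contDiffOn_const.mul (hp 5).contDiffOn).add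
      (contDiffOn_const.mul (hp 4).contDiffOn)).add
      (contDiffOn_const.mul (hp 3).contDiffOn)).sub (contDiffOn_const.mul (hp 6).contDiffOn)

theorem lipschitz_of_contDiffOn_compact {E F : Type*} [NormedAddCommGroup E] [NormedSpace ℝ E]
    [NormedAddCommGroup F] [NormedSpace ℝ F]
    {G : E → F} {U s : Set E} (hU : IsOpen U) (hG : ContDiffOn ℝ 1 G U)
    (hs : IsCompact s) (hconv : Convex ℝ s) (hsub : s ⊆ U) :
    ∃ K : NNReal, LipschitzOnWith K G s := by
  have hdiff : ∀ x ∈ s, DifferentiableAt ℝ G x := fun x hx =>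
    (hG.contDiffAt (hU.mem_nhds (hsub hx))).differentiableAt one_ne_zero
  have hcont : ContinuousOn (fderiv ℝ G) U := hG.continuousOn_fderiv_of_isOpen hU le_rfl
  obtain ⟨C, hC⟩ := hs.exists_bound_of_continuousOn (hcont.mono hsub)
  refine ⟨⟨max C 0, le_max_right _ _⟩, ?_⟩
  apply hconv.lipschitzOnWith_of_nnnorm_hasFDerivWithin_le
    (f' := fun x => fderiv ℝ G x)
    (fun x hx => (hdiff x hx).hasFDerivAt.hasFDerivWithinAt)
  intro x hx
  apply NNReal.coe_le_coe.mp
  exact (hC x hx).trans (le_max_left _ _)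

-- clamp map
theorem clamp_lipschitz (M₂ : ℝ) :
    LipschitzWith 1 (fun (x : Fin 7 → ℝ) i => max 0 (min (x i) M₂)) := by
  apply LipschitzWith.of_dist_le_mul
  intro x y
  rw [NNReal.coe_one, one_mul]
  rw [dist_pi_le_iff dist_nonneg]
  intro i
  rw [Real.dist_eq]
  calc |max 0 (min (x i) M₂) - max 0 (min (y i) M₂)|
      = |max (min (x i) M₂) 0 - max (min (y i) M₂) 0| := by rw [max_comm, max_comm 0]
    _ ≤ |min (x i) M₂ - min (y i) M₂| := abs_max_sub_max_le_abs _ _ _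
    _ ≤ max |x i - y i| |M₂ - M₂| := abs_min_sub_min_le_max _ _ _ _
    _ ≤ |x i - y i| := by rw [sub_self, abs_zero]; exact max_le le_rfl (abs_nonneg _)
    _ ≤ dist x y := by rw [← Real.dist_eq]; exact dist_le_pi_dist x y i

theorem clamp_mem (M₂ : ℝ) (hM₂ : 0 ≤ M₂) (x : Fin 7 → ℝ) :
    (fun i => max 0 (min (x i) M₂)) ∈ Set.univ.pi (fun _ : Fin 7 => Icc (0:ℝ) M₂) := by
  intro i _
  exact ⟨le_max_left _ _, max_le hM₂ (min_le_right _ _)⟩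

theorem clamp_eq_self (M₂ : ℝ) {x : Fin 7 → ℝ}
    (hx : x ∈ Set.univ.pi (fun _ : Fin 7 => Icc (0:ℝ) M₂)) :
    (fun i => max 0 (min (x i) M₂)) = x := by
  funext i
  obtain ⟨h1, h2⟩ := hx i (mem_univ i)
  rw [min_eq_left h2, max_eq_right h1]

variable {Λ b q lam μ σ εA γA dA εI γI dI γH dH θ p β₁ β₂ : ℝ}

theorem covidF_sum (x : Fin 7 → ℝ) :
    ∑ i, covidF Λ b q lam μ σ εA γA dA εI γI dI γH dH θ p β₁ β₂ x i =
      Λ - μ * (∑ i, x i) - (dA * x 3 + dI * x 4 + dH * x 5) := by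
  rw [Fin.sum_univ_seven, Fin.sum_univ_seven]
  show (Λ - (β₁ - β₂ * x 4 / (b + x 4)) * x 0 * (x 4 + θ * x 3) + lam * x 1 - (μ + q) * x 0)
      + (q * x 0 - (μ + lam) * x 1)
      + ((β₁ - β₂ * x 4 / (b + x 4)) * x 0 * (x 4 + θ * x 3) - (μ + σ) * x 2)
      + ((1 - p) * σ * x 2 - (μ + εA + γA + dA) * x 3)
      + (σ * p * x 2 - (μ + εI + γI + dI) * x 4)
      + (εI * x 4 + εA * x 3 - (μ + dH + γH) * x 5)
      + (γH * x 5 + γI * x 4 + γA * x 3 - μ * x 6) = _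
  ring

theorem covidF_coord_bound
    (hΛ : 0 < Λ) (hb : 0 < b) (hq : 0 < q) (hlam : 0 < lam) (hμ : 0 < μ)
    (hσ : 0 < σ) (hεA : 0 < εA) (hγA : 0 < γA) (hdA : 0 < dA)
    (hεI : 0 < εI) (hγI : 0 < γI) (hdI : 0 < dI) (hγH : 0 < γH) (hdH : 0 < dH)
    (hθ : θ ∈ Set.Ioo (0 : ℝ) 1) (hp : p ∈ Set.Ioo (0 : ℝ) 1)
    (hβ₂ : 0 < β₂) (hβ : β₂ ≤ β₁)
    {M1 : ℝ} (Y : Fin 7 → ℝ) (hY : ∀ j, 0 ≤ Y j) (hsum : (∑ j, Y j) ≤ M1) (i : Fin 7) :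
    0 ≤ covidF Λ b q lam μ σ εA γA dA εI γI dI γH dH θ p β₁ β₂ Y i +
      (β₁ * M1 * (1 + θ) + μ + q + lam + σ + εA + γA + dA + εI + γI + dI + dH + γH) * Y i := by
  have hYle : ∀ j, Y j ≤ M1 := by
    intro j
    calc Y j ≤ ∑ k, Y k := Finset.single_le_sum (fun k _ => hY k) (Finset.mem_univ j)
      _ ≤ M1 := hsum
  have hM1 : 0 ≤ M1 := (hY 0).trans (hYle 0)
  have hden : 0 < b + Y 4 := by linarith [hY 4]
  have hw0 : 0 ≤ β₂ * Y 4 / (b + Y 4) := div_nonneg (mul_nonneg hβ₂.le (hY 4)) hden.le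
  have hw1 : β₂ * Y 4 / (b + Y 4) ≤ β₂ := by
    rw [div_le_iff₀ hden]; nlinarith [mul_pos hβ₂ hb]
  have hβ₁ : 0 < β₁ := lt_of_lt_of_le hβ₂ hβ
  have hb0 : 0 ≤ β₁ - β₂ * Y 4 / (b + Y 4) := by linarith
  have h3 : 0 ≤ Y 4 + θ * Y 3 := by
    have := mul_nonneg hθ.1.le (hY 3); linarith [hY 4]
  have h2 : Y 4 + θ * Y 3 ≤ M1 * (1 + θ) := by
    have := mul_le_mul_of_nonneg_left (hYle 3) hθ.1.le
    have h4 := hYle 4; nlinarith []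
  have hBnn : 0 ≤ (β₁ - β₂ * Y 4 / (b + Y 4)) * Y 0 * (Y 4 + θ * Y 3) :=
    mul_nonneg (mul_nonneg hb0 (hY 0)) h3
  have hBM : 0 ≤ β₁ * M1 * (1 + θ) :=
    mul_nonneg (mul_nonneg hβ₁.le hM1) (by linarith [hθ.1])
  have hBle : (β₁ - β₂ * Y 4 / (b + Y 4)) * Y 0 * (Y 4 + θ * Y 3) ≤ β₁ * M1 * (1 + θ) * Y 0 := by
    have h1 : (β₁ - β₂ * Y 4 / (b + Y 4)) * Y 0 ≤ β₁ * Y 0 :=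
      mul_le_mul_of_nonneg_right (by linarith) (hY 0)
    calc (β₁ - β₂ * Y 4 / (b + Y 4)) * Y 0 * (Y 4 + θ * Y 3)
        ≤ (β₁ * Y 0) * (M1 * (1 + θ)) :=
          mul_le_mul h1 h2 h3 (mul_nonneg hβ₁.le (hY 0))
      _ = β₁ * M1 * (1 + θ) * Y 0 := by ring
  set L := β₁ * M1 * (1 + θ) + μ + q + lam + σ + εA + γA + dA + εI + γI + dI + dH + γH with hLdef
  fin_cases i
  · show 0 ≤ (Λ - (β₁ - β₂ * Y 4 / (b + Y 4)) * Y 0 * (Y 4 + θ * Y 3) + lam * Y 1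
      - (μ + q) * Y 0) + L * Y 0
    rw [hLdef]
    linarith [mul_nonneg hlam.le (hY 1), hY 0,
      mul_nonneg (by linarith [hBM] : (0:ℝ) ≤ lam + σ + εA + γA + dA + εI + γI + dI + dH + γH) (hY 0)]
  · show 0 ≤ (q * Y 0 - (μ + lam) * Y 1) + L * Y 1
    rw [hLdef]
    linarith [mul_nonneg hq.le (hY 0), hY 1,
      mul_nonneg (by linarith [hBM] : (0:ℝ) ≤ β₁ * M1 * (1+θ) + q + σ + εA + γA + dA + εI + γI + dI + dH + γH) (hY 1)]
  · show 0 ≤ ((β₁ - β₂ * Y 4 / (b + Y 4)) * Y 0 * (Y 4 + θ * Y 3) - (μ + σ) * Y 2) + L * Y 2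
    rw [hLdef]
    linarith [hBnn,
      mul_nonneg (by linarith [hBM] : (0:ℝ) ≤ β₁ * M1 * (1+θ) + q + lam + εA + γA + dA + εI + γI + dI + dH + γH) (hY 2)]
  · show 0 ≤ ((1 - p) * σ * Y 2 - (μ + εA + γA + dA) * Y 3) + L * Y 3
    rw [hLdef]
    linarith [mul_nonneg (mul_nonneg (by linarith [hp.2] : (0:ℝ) ≤ 1 - p) hσ.le) (hY 2),
      mul_nonneg (by linarith [hBM] : (0:ℝ) ≤ β₁ * M1 * (1+θ) + q + lam + σ + εI + γI + dI + dH + γH) (hY 3)]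
  · show 0 ≤ (σ * p * Y 2 - (μ + εI + γI + dI) * Y 4) + L * Y 4
    rw [hLdef]
    linarith [mul_nonneg (mul_nonneg hσ.le hp.1.le) (hY 2),
      mul_nonneg (by linarith [hBM] : (0:ℝ) ≤ β₁ * M1 * (1+θ) + q + lam + σ + εA + γA + dA + dH + γH) (hY 4)]
  · show 0 ≤ (εI * Y 4 + εA * Y 3 - (μ + dH + γH) * Y 5) + L * Y 5
    rw [hLdef]
    linarith [mul_nonneg hεI.le (hY 4), mul_nonneg hεA.le (hY 3),
      mul_nonneg (by linarith [hBM] : (0:ℝ) ≤ β₁ * M1 * (1+θ) + q + lam + σ + εA + γA + dA + εI + γI + dI) (hY 5)]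
  · show 0 ≤ (γH * Y 5 + γI * Y 4 + γA * Y 3 - μ * Y 6) + L * Y 6
    rw [hLdef]
    linarith [mul_nonneg hγH.le (hY 5), mul_nonneg hγI.le (hY 4), mul_nonneg hγA.le (hY 3),
      mul_nonneg (by linarith [hBM] : (0:ℝ) ≤ β₁ * M1 * (1+θ) + q + lam + σ + εA + γA + dA + εI + γI + dI + dH + γH) (hY 6)]

theorem covid_invariance
    (hΛ : 0 < Λ) (hb : 0 < b) (hq : 0 < q) (hlam : 0 < lam) (hμ : 0 < μ)
    (hσ : 0 < σ) (hεA : 0 < εA) (hγA : 0 < γA) (hdA : 0 < dA)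
    (hεI : 0 < εI) (hγI : 0 < γI) (hdI : 0 < dI) (hγH : 0 < γH) (hdH : 0 < dH)
    (hθ : θ ∈ Set.Ioo (0 : ℝ) 1) (hp : p ∈ Set.Ioo (0 : ℝ) 1)
    (hβ₂ : 0 < β₂) (hβ : β₂ ≤ β₁)
    (x₀ : Fin 7 → ℝ) (hx₀ : ∀ i, 0 < x₀ i)
    (y d : ℝ → Fin 7 → ℝ)
    (hy0 : y 0 = x₀)
    (hyd : ∀ t : ℝ, 0 ≤ t → HasDerivWithinAt y (d t) (Set.Ici 0) t)
    (hd : ∀ t : ℝ, 0 ≤ t → (∀ i, 0 ≤ y t i) → (∑ i, y t i) ≤ (Λ / μ + ∑ i, x₀ i) + 1 →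
      d t = covidF Λ b q lam μ σ εA γA dA εI γI dI γH dH θ p β₁ β₂ (y t)) :
    ∀ t : ℝ, 0 ≤ t → (∀ i, 0 < y t i) ∧ (∑ i, y t i) ≤ Λ / μ + ∑ i, x₀ i := by
  have hN₀pos : 0 < ∑ i, x₀ i :=
    Finset.sum_pos (fun i _ => hx₀ i) Finset.univ_nonempty
  set N₀ := ∑ i, x₀ i with hN₀
  set M := Λ / μ + N₀ with hMdef
  have hΛμ : 0 < Λ / μ := div_pos hΛ hμ
  have hMpos : 0 < M := by rw [hMdef]; linarith
  have hycont : ContinuousOn y (Ici 0) := fun s hs => (hyd s hs).continuousWithinAt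
  set z : ℝ → Fin 7 → ℝ := fun s => y (max s 0) with hzdef
  have hz : Continuous z :=
    hycont.comp_continuous (continuous_id.max continuous_const) (fun s => le_max_right s 0)
  have hzeq : ∀ s : ℝ, 0 ≤ s → z s = y s := by
    intro s hs; rw [hzdef]; simp only [max_eq_left hs]
  have hyd' : ∀ s : ℝ, 0 < s → HasDerivAt y (d s) s :=
    fun s hs => (hyd s hs.le).hasDerivAt (Ici_mem_nhds hs)
  have hydi : ∀ s : ℝ, 0 < s → ∀ i, HasDerivAt (fun u => y u i) (d s i) s :=
    fun s hs i => hasDerivAt_pi.mp (hyd' s hs) i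
  have hNcont : ContinuousOn (fun s => ∑ i, y s i) (Ici 0) :=
    continuousOn_finset_sum _ (fun i _ => (continuous_apply i).comp_continuousOn hycont)
  -- sub-lemma 1 : N bound
  have hNb : ∀ c : ℝ, 0 ≤ c →
      (∀ s, s ∈ Icc 0 c → (∀ i, 0 ≤ y s i) ∧
        d s = covidF Λ b q lam μ σ εA γA dA εI γI dI γH dH θ p β₁ β₂ (y s)) →
      (∑ i, y c i) ≤ M := by
    intro c hc hyp
    set g : ℝ → ℝ := fun s => ((∑ i, y s i) - Λ / μ) * Real.exp (μ * s) with hgdef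
    have hgd : ∀ s ∈ Ioo (0:ℝ) c, HasDerivAt g
        ((∑ i, d s i) * Real.exp (μ * s) + ((∑ i, y s i) - Λ / μ) * (Real.exp (μ * s) * μ)) s := by
      intro s hs
      have h1 : HasDerivAt (fun u => (∑ i, y u i) - Λ / μ) (∑ i, d s i) s :=
        (HasDerivAt.fun_sum (fun i _ => hydi s hs.1 i)).sub_const _
      have h2 : HasDerivAt (fun u : ℝ => Real.exp (μ * u)) (Real.exp (μ * s) * μ) s := by
        have h3 : HasDerivAt (fun u : ℝ => μ * u) μ s := by
          simpa using (hasDerivAt_id s).const_mul μ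
        exact h3.exp
      exact h1.mul h2
    have hganti : AntitoneOn g (Icc 0 c) := by
      apply antitoneOn_of_deriv_nonpos (convex_Icc 0 c)
      · exact ((hNcont.mono Icc_subset_Ici_self).sub continuousOn_const).mul
          (Real.continuous_exp.comp (continuous_const.mul continuous_id)).continuousOn
      · intro s hs
        rw [interior_Icc] at hs
        exact (hgd s hs).differentiableAt.differentiableWithinAt
      · intro s hs
        rw [interior_Icc] at hs
        rw [(hgd s hs).deriv]
        obtain ⟨hpos, hdF⟩ := hyp s (Ioo_subset_Icc_self hs)
        rw [hdF, covidF_sum]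
        have he : (0:ℝ) < Real.exp (μ * s) := Real.exp_pos _
        have hD : 0 ≤ dA * y s 3 + dI * y s 4 + dH * y s 5 := by
          have h1 := mul_nonneg hdA.le (hpos 3)
          have h2 := mul_nonneg hdI.le (hpos 4)
          have h3 := mul_nonneg hdH.le (hpos 5)
          linarith
        have hcalc : (Λ - μ * (∑ i, y s i) - (dA * y s 3 + dI * y s 4 + dH * y s 5)) *
              Real.exp (μ * s) + ((∑ i, y s i) - Λ / μ) * (Real.exp (μ * s) * μ)
            = -((dA * y s 3 + dI * y s 4 + dH * y s 5) * Real.exp (μ * s)) := by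
          field_simp
          ring
        rw [hcalc]
        exact neg_nonpos_of_nonneg (mul_nonneg hD he.le)
    have h0c := hganti (left_mem_Icc.2 hc) (right_mem_Icc.2 hc) hc
    have hg0 : g 0 = N₀ - Λ / μ := by
      rw [hgdef]; simp only [mul_zero, Real.exp_zero, mul_one, hy0, hN₀]
    have hgc : g c = ((∑ i, y c i) - Λ / μ) * Real.exp (μ * c) := rfl
    rcases le_or_gt (∑ i, y c i) (Λ / μ) with h | h
    · rw [hMdef]; linarith
    · have hone : (1:ℝ) ≤ Real.exp (μ * c) := Real.one_le_exp (by positivity)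
      have h2 : (∑ i, y c i) - Λ / μ ≤ ((∑ i, y c i) - Λ / μ) * Real.exp (μ * c) :=
        le_mul_of_one_le_right (by linarith) hone
      rw [hg0] at h0c
      rw [hgc] at h0c
      rw [hMdef]
      linarith
  -- sub-lemma 2 : coordinate positivity
  have hcoord : ∀ c : ℝ, 0 ≤ c →
      (∀ s, s ∈ Icc 0 c → (∀ i, 0 ≤ y s i) ∧ (∑ i, y s i) ≤ M + 1 ∧
        d s = covidF Λ b q lam μ σ εA γA dA εI γI dI γH dH θ p β₁ β₂ (y s)) →
      ∀ i, 0 < y c i := by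
    intro c hc hyp i
    set L := β₁ * (M + 1) * (1 + θ) + μ + q + lam + σ + εA + γA + dA + εI + γI + dI + dH + γH
      with hLdef
    set g : ℝ → ℝ := fun s => y s i * Real.exp (L * s) with hgdef
    have hgd : ∀ s ∈ Ioo (0:ℝ) c, HasDerivAt g
        (d s i * Real.exp (L * s) + y s i * (Real.exp (L * s) * L)) s := by
      intro s hs
      have h2 : HasDerivAt (fun u : ℝ => Real.exp (L * u)) (Real.exp (L * s) * L) s := by
        have h3 : HasDerivAt (fun u : ℝ => L * u) L s := by
          simpa using (hasDerivAt_id s).const_mul L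
        exact h3.exp
      exact (hydi s hs.1 i).mul h2
    have hgmono : MonotoneOn g (Icc 0 c) := by
      apply monotoneOn_of_deriv_nonneg (convex_Icc 0 c)
      · exact (((continuous_apply i).comp_continuousOn hycont).mono Icc_subset_Ici_self).mul
          (Real.continuous_exp.comp (continuous_const.mul continuous_id)).continuousOn
      · intro s hs
        rw [interior_Icc] at hs
        exact (hgd s hs).differentiableAt.differentiableWithinAt
      · intro s hs
        rw [interior_Icc] at hs
        rw [(hgd s hs).deriv]
        obtain ⟨hpos, hsum, hdF⟩ := hyp s (Ioo_subset_Icc_self hs)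
        have hkey := covidF_coord_bound hΛ hb hq hlam hμ hσ hεA hγA hdA hεI hγI hdI hγH hdH
          hθ hp hβ₂ hβ (y s) hpos hsum i
        have hkey' : 0 ≤ covidF Λ b q lam μ σ εA γA dA εI γI dI γH dH θ p β₁ β₂ (y s) i
            + L * y s i := by rw [hLdef]; exact hkey
        rw [hdF]
        have he : (0:ℝ) < Real.exp (L * s) := Real.exp_pos _
        nlinarith [mul_nonneg hkey' he.le]
    have h0c := hgmono (left_mem_Icc.2 hc) (right_mem_Icc.2 hc) hc
    have hg0 : g 0 = x₀ i := by
      rw [hgdef]; simp only [mul_zero, Real.exp_zero, mul_one, hy0]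
    have hgc : g c = y c i * Real.exp (L * c) := rfl
    have he : (0:ℝ) < Real.exp (L * c) := Real.exp_pos _
    by_contra hcon
    push_neg at hcon
    have hneg : g c ≤ 0 := by rw [hgc]; exact mul_nonpos_of_nonpos_of_nonneg hcon he.le
    rw [hg0] at h0c
    linarith [hx₀ i]
  -- main exit-time argument
  have key : ∀ T : ℝ, 0 ≤ T → ∀ s, s ∈ Icc 0 T →
      (∀ i, 0 < y s i) ∧ (∑ i, y s i) < M + 1 := by
    intro T hT
    set S : Set ℝ := Icc 0 T ∩
      ((⋃ i : Fin 7, {s : ℝ | z s i ≤ 0}) ∪ {s : ℝ | M + 1 ≤ ∑ i, z s i}) with hSdef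
    have hmemS : ∀ s, s ∈ Icc 0 T → ¬((∀ i, 0 < y s i) ∧ (∑ i, y s i) < M + 1) → s ∈ S := by
      intro s hs hcon
      rw [not_and_or] at hcon
      refine ⟨hs, ?_⟩
      rcases hcon with h | h
      · push_neg at h
        obtain ⟨i, hi⟩ := h
        exact Or.inl (mem_iUnion.2 ⟨i, by rw [mem_setOf_eq, hzeq s hs.1]; exact hi⟩)
      · exact Or.inr (by rw [mem_setOf_eq, hzeq s hs.1]; linarith [not_lt.mp h])
    suffices hSempty : ¬ S.Nonempty by
      intro s hs
      by_contra hcon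
      exact hSempty ⟨s, hmemS s hs hcon⟩
    intro hne
    have hclosed : IsClosed S := by
      apply IsClosed.inter isClosed_Icc
      apply IsClosed.union
      · exact isClosed_iUnion_of_finite
          (fun i => isClosed_le ((continuous_apply i).comp hz) continuous_const)
      · exact isClosed_le continuous_const
          (continuous_finset_sum _ (fun i _ => (continuous_apply i).comp hz))
    have hbdd : BddBelow S := ⟨0, fun s hs => hs.1.1⟩
    have hτS : sInf S ∈ S := hclosed.csInf_mem hne hbdd
    set τ := sInf S with hτdef
    have hτIcc : τ ∈ Icc 0 T := hτS.1
    have hτpos : 0 < τ := by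
      rcases eq_or_lt_of_le hτIcc.1 with h | h
      · exfalso
        have h0 : z 0 = x₀ := by rw [hzeq 0 le_rfl, hy0]
        rcases hτS.2 with hcase | hcase
        · rw [← h] at hcase
          obtain ⟨i, hi⟩ := mem_iUnion.mp hcase
          rw [mem_setOf_eq, h0] at hi
          exact absurd hi (not_le.2 (hx₀ i))
        · rw [← h] at hcase
          rw [mem_setOf_eq, h0] at hcase
          rw [hMdef] at hcase
          linarith
      · exact h
    have hbefore : ∀ s, s ∈ Ico 0 τ → (∀ i, 0 < y s i) ∧ (∑ i, y s i) < M + 1 := by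
      intro s hs
      by_contra hcon
      have hmem : s ∈ S := hmemS s ⟨hs.1, hs.2.le.trans hτIcc.2⟩ hcon
      exact absurd (csInf_le hbdd hmem) (not_le.2 hs.2)
    have hIccτ : ∀ s, s ∈ Icc 0 τ → (∀ i, 0 ≤ y s i) ∧ (∑ i, y s i) ≤ M + 1 := by
      have h1 : IsClosed {u : ℝ | ∀ i, 0 ≤ z u i} := by
        rw [setOf_forall]
        exact isClosed_iInter
          (fun i => isClosed_le continuous_const ((continuous_apply i).comp hz))
      have h2 : IsClosed {u : ℝ | (∑ i, z u i) ≤ M + 1} :=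
        isClosed_le (continuous_finset_sum _ (fun i _ => (continuous_apply i).comp hz))
          continuous_const
      have hcl : IsClosed {u : ℝ | (∀ i, 0 ≤ z u i) ∧ (∑ i, z u i) ≤ M + 1} := by
        rw [setOf_and]
        exact h1.inter h2
      have hIco : Ico 0 τ ⊆ {u : ℝ | (∀ i, 0 ≤ z u i) ∧ (∑ i, z u i) ≤ M + 1} := by
        intro s hs
        obtain ⟨ha, hb'⟩ := hbefore s hs
        rw [mem_setOf_eq, hzeq s hs.1]
        exact ⟨fun i => (ha i).le, hb'.le⟩
      have hsub : Icc 0 τ ⊆ {u : ℝ | (∀ i, 0 ≤ z u i) ∧ (∑ i, z u i) ≤ M + 1} := by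
        calc Icc 0 τ = closure (Ico 0 τ) := (closure_Ico hτpos.ne).symm
          _ ⊆ closure {u : ℝ | (∀ i, 0 ≤ z u i) ∧ (∑ i, z u i) ≤ M + 1} := closure_mono hIco
          _ = {u : ℝ | (∀ i, 0 ≤ z u i) ∧ (∑ i, z u i) ≤ M + 1} := hcl.closure_eq
      intro s hs
      have h3 := hsub hs
      rw [mem_setOf_eq, hzeq s hs.1] at h3
      exact h3
    have hdFτ : ∀ s, s ∈ Icc 0 τ →
        d s = covidF Λ b q lam μ σ εA γA dA εI γI dI γH dH θ p β₁ β₂ (y s) :=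
      fun s hs => hd s hs.1 (hIccτ s hs).1 (hIccτ s hs).2
    have hsumτ : (∑ i, y τ i) ≤ M :=
      hNb τ hτIcc.1 (fun s hs => ⟨(hIccτ s hs).1, hdFτ s hs⟩)
    have hposτ : ∀ i, 0 < y τ i :=
      hcoord τ hτIcc.1 (fun s hs => ⟨(hIccτ s hs).1, (hIccτ s hs).2, hdFτ s hs⟩)
    rcases hτS.2 with hcase | hcase
    · obtain ⟨i, hi⟩ := mem_iUnion.mp hcase
      rw [mem_setOf_eq, hzeq τ hτIcc.1] at hi
      exact absurd hi (not_le.2 (hposτ i))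
    · rw [mem_setOf_eq, hzeq τ hτIcc.1] at hcase
      linarith
  intro t ht
  have h1 := key t ht t (right_mem_Icc.2 ht)
  refine ⟨h1.1, ?_⟩
  apply hNb t ht
  intro s hs
  have h2 := key t ht s hs
  exact ⟨fun i => (h2.1 i).le, hd s hs.1 (fun i => (h2.1 i).le) h2.2.le⟩

end CovidAux

/-- existence, uniqueness (on `[0,∞)`), positivity and boundedness
of the solution of the COVID-19 system for any initial value in the positive orthant. -/
theorem covid_existence_uniqueness_positivity_boundedness
    (Λ b q lam μ σ εA γA dA εI γI dI γH dH θ p β₁ β₂ : ℝ)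
    (hΛ : 0 < Λ) (hb : 0 < b) (hq : 0 < q) (hlam : 0 < lam) (hμ : 0 < μ)
    (hσ : 0 < σ) (hεA : 0 < εA) (hγA : 0 < γA) (hdA : 0 < dA)
    (hεI : 0 < εI) (hγI : 0 < γI) (hdI : 0 < dI) (hγH : 0 < γH) (hdH : 0 < dH)
    (hθ : θ ∈ Set.Ioo (0 : ℝ) 1) (hp : p ∈ Set.Ioo (0 : ℝ) 1)
    (hβ₂ : 0 < β₂) (hβ : β₂ ≤ β₁) :
    ∀ x₀ : Fin 7 → ℝ, (∀ i, 0 < x₀ i) →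
      ∃ x : ℝ → Fin 7 → ℝ,
        (IsSolution (covidF Λ b q lam μ σ εA γA dA εI γI dI γH dH θ p β₁ β₂) x ∧ x 0 = x₀ ∧
          (∀ t : ℝ, 0 ≤ t → ∀ i, 0 < x t i) ∧
          (∀ t : ℝ, 0 ≤ t → (∑ i, x t i) ≤ Λ / μ + ∑ i, x₀ i)) ∧
        (∀ y : ℝ → Fin 7 → ℝ, IsSolution (covidF Λ b q lam μ σ εA γA dA εI γI dI γH dH θ p β₁ β₂) y → y 0 = x₀ →
          ∀ t : ℝ, 0 ≤ t → y t = x t) := by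
  intro x₀ hx₀
  have hN₀pos : 0 < ∑ i, x₀ i := Finset.sum_pos (fun i _ => hx₀ i) Finset.univ_nonempty
  have hΛμ : 0 < Λ / μ := div_pos hΛ hμ
  set M := Λ / μ + ∑ i, x₀ i with hMdef
  set M₂ := M + 2 with hM₂def
  have hM₂nn : (0:ℝ) ≤ M₂ := by rw [hM₂def, hMdef]; linarith
  have hUopen : IsOpen {x : Fin 7 → ℝ | 0 < b + x 4} :=
    isOpen_lt continuous_const (continuous_const.add (continuous_apply 4))
  have hboxsub : Set.univ.pi (fun _ : Fin 7 => Set.Icc (0:ℝ) M₂) ⊆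
      {x : Fin 7 → ℝ | 0 < b + x 4} := by
    intro x hx
    have h4 := (hx 4 (Set.mem_univ 4)).1
    show 0 < b + x 4
    linarith
  obtain ⟨K, hKlip⟩ := lipschitz_of_contDiffOn_compact hUopen
    (covid_contDiffOn Λ b q lam μ σ εA γA dA εI γI dI γH dH θ p β₁ β₂)
    (isCompact_univ_pi (fun _ => isCompact_Icc)) (convex_pi (fun i _ => convex_Icc 0 M₂)) hboxsub
  obtain ⟨C, hC⟩ := (isCompact_univ_pi (fun _ : Fin 7 => isCompact_Icc)).exists_bound_of_continuousOn
    ((covid_contDiffOn Λ b q lam μ σ εA γA dA εI γI dI γH dH θ p β₁ β₂).continuousOn.mono hboxsub)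
  set G : (Fin 7 → ℝ) → Fin 7 → ℝ :=
    fun x => covidF Λ b q lam μ σ εA γA dA εI γI dI γH dH θ p β₁ β₂
      (fun i => max 0 (min (x i) M₂)) with hGdef
  have hG_lip : LipschitzWith K G := by
    apply LipschitzWith.of_dist_le_mul
    intro x y
    calc dist (G x) (G y)
        ≤ K * dist (fun i => max 0 (min (x i) M₂)) (fun i => max 0 (min (y i) M₂)) :=
          hKlip.dist_le_mul _ (clamp_mem M₂ hM₂nn x) _ (clamp_mem M₂ hM₂nn y)
      _ ≤ K * dist x y := by
          have h := (clamp_lipschitz M₂).dist_le_mul x y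
          rw [NNReal.coe_one, one_mul] at h
          exact mul_le_mul_of_nonneg_left h K.coe_nonneg
  have hG_bd : ∀ x, ‖G x‖ ≤ C := fun x => hC _ (clamp_mem M₂ hM₂nn x)
  have hGF : ∀ w : Fin 7 → ℝ, (∀ i, 0 ≤ w i) → (∑ i, w i) ≤ M + 1 →
      G w = covidF Λ b q lam μ σ εA γA dA εI γI dI γH dH θ p β₁ β₂ w := by
    intro w h1 h2
    have hmem : w ∈ Set.univ.pi (fun _ : Fin 7 => Set.Icc (0:ℝ) M₂) := by
      intro i _
      refine ⟨h1 i, ?_⟩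
      calc w i ≤ ∑ j, w j := Finset.single_le_sum (fun j _ => h1 j) (Finset.mem_univ i)
        _ ≤ M + 1 := h2
        _ ≤ M₂ := by rw [hM₂def]; linarith
    show covidF Λ b q lam μ σ εA γA dA εI γI dI γH dH θ p β₁ β₂
      (fun i => max 0 (min (w i) M₂)) = _
    rw [clamp_eq_self M₂ hmem]
  obtain ⟨f, hf0, hfd⟩ := exists_global_solution hG_lip hG_bd x₀
  have hinv_f := covid_invariance hΛ hb hq hlam hμ hσ hεA hγA hdA hεI hγI hdI hγH hdH hθ hp
    hβ₂ hβ x₀ hx₀ f (fun t => G (f t)) hf0 hfd (fun t _ h1 h2 => hGF (f t) h1 h2)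
  have hsol_f : IsSolution (covidF Λ b q lam μ σ εA γA dA εI γI dI γH dH θ p β₁ β₂) f := by
    intro t ht
    have h := hfd t ht
    rwa [hGF (f t) (fun i => ((hinv_f t ht).1 i).le) ((hinv_f t ht).2.trans (by linarith))] at h
  refine ⟨f, ⟨hsol_f, hf0, fun t ht => (hinv_f t ht).1, fun t ht => (hinv_f t ht).2⟩, ?_⟩
  intro y hy hy0 t ht
  have hinv_y := covid_invariance hΛ hb hq hlam hμ hσ hεA hγA hdA hεI hγI hdI hγH hdH hθ hp
    hβ₂ hβ x₀ hx₀ y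
    (fun s => covidF Λ b q lam μ σ εA γA dA εI γI dI γH dH θ p β₁ β₂ (y s)) hy0 hy
    (fun s _ _ _ => rfl)
  have hyG : ∀ s : ℝ, 0 ≤ s → HasDerivWithinAt y (G (y s)) (Set.Ici 0) s := by
    intro s hs
    have h := hy s hs
    rwa [← hGF (y s) (fun i => ((hinv_y s hs).1 i).le) ((hinv_y s hs).2.trans (by linarith))] at h
  have huniq := ODE_solution_unique_of_mem_Icc_right
    (v := fun _ x => G x) (s := fun _ => Set.univ) (K := K)
    (fun _ _ => hG_lip.lipschitzOnWith) (f := y) (g := f) (a := 0) (b := t + 1)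
    (fun s hs => ((hy s hs.1).continuousWithinAt).mono Set.Icc_subset_Ici_self)
    (fun s hs => (hyG s hs.1).mono (Set.Ici_subset_Ici.2 hs.1))
    (fun s _ => Set.mem_univ _)
    (fun s hs => ((hfd s hs.1).continuousWithinAt).mono Set.Icc_subset_Ici_self)
    (fun s hs => (hfd s hs.1).mono (Set.Ici_subset_Ici.2 hs.1))
    (fun s _ => Set.mem_univ _)
    (by rw [hy0, hf0])
  exact huniq ⟨ht, by linarith⟩
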